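/- Let ρ > 1 and suppose φ : [0,∞) → ℝ satisfies: for every x ∈ [0,∞), φ(x+n)/(ρ^{x+n} l_ρ(x)) → c as n → ∞ through the integers, where c ∈ ℝ and l_ρ(x) = (1+(ρ−1){x})ρ^{−{x}}, and φ is nondecreasing. Then φ(x)/(ρ^x l_ρ(x)) → c as x → ∞ through the reals. -/

import Mathlib

open Filter

/-- The 1-periodic function `l_ρ(x) = (1+(ρ−1){x})·ρ^{−{x}}`. -/
noncomputable def lrho (ρ x : ℝ) : ℝ :=
  (1 + (ρ - 1) * Int.fract x) * ρ ^ (-Int.fract x)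

noncomputable def grho (ρ x : ℝ) : ℝ := ρ ^ x * lrho ρ x

lemma grho_eq (ρ : ℝ) (hρ : 0 < ρ) (x : ℝ) :
    grho ρ x = ρ ^ ((⌊x⌋ : ℝ)) * (1 + (ρ - 1) * Int.fract x) := by
  unfold grho lrho
  rw [show ρ ^ x * ((1 + (ρ - 1) * Int.fract x) * ρ ^ (-Int.fract x))
      = (ρ ^ x * ρ ^ (-Int.fract x)) * (1 + (ρ - 1) * Int.fract x) by ring,
    ← Real.rpow_add hρ, ← sub_eq_add_neg, Int.self_sub_fract]

lemma grho_pos {ρ : ℝ} (hρ : 1 < ρ) (x : ℝ) : 0 < grho ρ x := by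
  rw [grho_eq ρ (by linarith) x]
  have h1 := Int.fract_nonneg x
  exact mul_pos (Real.rpow_pos_of_pos (by linarith) _) (by nlinarith)

lemma grho_mono {ρ : ℝ} (hρ : 1 < ρ) : Monotone (grho ρ) := by
  intro x y hxy
  have h0 : (0:ℝ) < ρ := by linarith
  rw [grho_eq ρ h0, grho_eq ρ h0]
  have hfx0 := Int.fract_nonneg x
  have hfx1 := Int.fract_lt_one x
  have hfy0 := Int.fract_nonneg y
  have hfy1 := Int.fract_lt_one y
  have hpx : (0:ℝ) < ρ ^ ((⌊x⌋:ℝ)) := Real.rpow_pos_of_pos h0 _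
  have hpy : (0:ℝ) < ρ ^ ((⌊y⌋:ℝ)) := Real.rpow_pos_of_pos h0 _
  rcases eq_or_lt_of_le (Int.floor_le_floor hxy) with h | h
  · have hf : Int.fract x ≤ Int.fract y := by
      unfold Int.fract; rw [h]; linarith
    rw [h]
    have : 1 + (ρ - 1) * Int.fract x ≤ 1 + (ρ - 1) * Int.fract y := by nlinarith
    exact mul_le_mul_of_nonneg_left this hpy.le
  · have h1 : ((⌊x⌋:ℝ)) + 1 ≤ (⌊y⌋:ℝ) := by exact_mod_cast Int.add_one_le_iff.2 h
    have h2 : ρ ^ ((⌊x⌋:ℝ)) * ρ ≤ ρ ^ ((⌊y⌋:ℝ)) := by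
      calc ρ ^ ((⌊x⌋:ℝ)) * ρ = ρ ^ ((⌊x⌋:ℝ) + 1) := by
            rw [Real.rpow_add h0, Real.rpow_one]
        _ ≤ ρ ^ ((⌊y⌋:ℝ)) := Real.rpow_le_rpow_of_exponent_le hρ.le h1
    have e1 : ρ ^ ((⌊x⌋:ℝ)) * (1 + (ρ - 1) * Int.fract x) ≤ ρ ^ ((⌊x⌋:ℝ)) * ρ :=
      mul_le_mul_of_nonneg_left (by nlinarith) hpx.le
    have e2 : ρ ^ ((⌊y⌋:ℝ)) * 1 ≤ ρ ^ ((⌊y⌋:ℝ)) * (1 + (ρ - 1) * Int.fract y) :=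
      mul_le_mul_of_nonneg_left (by nlinarith) hpy.le
    linarith

lemma grho_grid {ρ : ℝ} (hρ : 1 < ρ) (m n j : ℕ) (hm : 0 < m) (hj : j < m) :
    grho ρ ((j:ℝ)/m + n) = ρ ^ ((n:ℝ)) * (1 + (ρ - 1) * ((j:ℝ)/m)) := by
  have h0 : (0:ℝ) < ρ := by linarith
  have hmem : (j:ℝ)/m ∈ Set.Ico (0:ℝ) 1 := by
    constructor
    · positivity
    · rw [div_lt_one (by exact_mod_cast hm)]
      exact_mod_cast hj
  rw [grho_eq ρ h0]
  rw [Int.fract_add_natCast, Int.fract_eq_self.2 ⟨hmem.1, hmem.2⟩]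
  congr 2
  have : ⌊(j:ℝ)/m + n⌋ = ⌊(j:ℝ)/m⌋ + n := Int.floor_add_natCast _ _
  rw [this, Int.floor_eq_zero_iff.2 hmem]
  push_cast; ring

lemma arith_cross (ρ P d : ℝ) (hρ : 1 < ρ) (hP : 0 ≤ P) (hd0 : 0 ≤ d) (hd1 : d ≤ 1) :
    P * ρ ≤ (1 + (ρ-1) * d) * (P * (1 + (ρ-1)*(1-d))) := by
  nlinarith [mul_nonneg (mul_nonneg hP (sq_nonneg (ρ-1)))
    (mul_nonneg hd0 (by linarith : (0:ℝ) ≤ 1-d))]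

lemma arith_same (ρ P a d : ℝ) (hP : 0 ≤ P) (ha : 0 ≤ a) (hd0 : 0 ≤ d) :
    P * (1 + (ρ-1) * (a + d)) ≤ (1 + (ρ-1) * d) * (P * (1 + (ρ-1)*a)) := by
  nlinarith [mul_nonneg (mul_nonneg hP (sq_nonneg (ρ-1))) (mul_nonneg ha hd0)]

lemma grho_ratio {ρ : ℝ} (hρ : 1 < ρ) (m k : ℕ) (hm : 0 < m) :
    grho ρ (((k:ℝ)+1)/m) ≤ (1 + (ρ-1)/m) * grho ρ ((k:ℝ)/m) := by
  have hmR : (0:ℝ) < m := Nat.cast_pos.2 hm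
  have hm1 : (1:ℝ) ≤ m := by exact_mod_cast hm
  set n := k / m with hndef
  set j := k % m with hjdef
  have hj : j < m := Nat.mod_lt _ hm
  have hk : m * n + j = k := Nat.div_add_mod k m
  have hkm : (k:ℝ)/m = (j:ℝ)/m + n := by
    have h : (k:ℝ) = m*n + j := by exact_mod_cast hk.symm
    rw [h]; field_simp; ring
  have hP : (0:ℝ) < ρ ^ ((n:ℝ)) := Real.rpow_pos_of_pos (by linarith) _
  have hjm0 : (0:ℝ) ≤ (j:ℝ)/m := by positivity
  have hd0 : (0:ℝ) < 1/m := by positivity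
  rcases eq_or_lt_of_le (Nat.succ_le_of_lt hj) with h | h
  · -- j + 1 = m : crossing an integer
    have hknat : k + 1 = m*(n+1) := by rw [Nat.mul_add, Nat.mul_one, ← hk]; omega
    have hk1 : ((k:ℝ)+1)/m = ((0:ℕ):ℝ)/m + ((n+1:ℕ):ℝ) := by
      have h2 : ((k:ℝ)+1) = (m:ℝ) * ((n:ℝ)+1) := by exact_mod_cast hknat
      rw [h2]; push_cast; field_simp; ring
    have hjR : (j:ℝ) = (m:ℝ) - 1 := by
      have h3 : ((j:ℝ)+1) = m := by exact_mod_cast h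
      linarith
    rw [hkm, hk1, grho_grid hρ m (n+1) 0 hm hm, grho_grid hρ m n j hm hj]
    rw [hjR]
    have hrpow : ρ ^ (((n+1:ℕ)):ℝ) = ρ ^ ((n:ℝ)) * ρ := by
      push_cast
      rw [Real.rpow_add (by linarith), Real.rpow_one]
    rw [hrpow]
    have hmm : ((m:ℝ)-1)/m = 1 - 1/m := by field_simp
    rw [hmm]
    have hd1 : (1:ℝ)/m ≤ 1 := by rw [div_le_one hmR]; exact hm1
    rw [Nat.cast_zero, zero_div, mul_zero, add_zero, mul_one, div_eq_mul_one_div (ρ-1) (m:ℝ)]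
    exact arith_cross ρ _ _ hρ hP.le hd0.le hd1
  · -- j + 1 < m : same integer part
    have hknat : m * n + (j+1) = k + 1 := by rw [← Nat.add_assoc, hk]
    have hk1 : ((k:ℝ)+1)/m = ((j+1:ℕ):ℝ)/m + ((n:ℕ):ℝ) := by
      have h2 : ((k:ℝ)+1) = (m:ℝ)*n + ((j:ℝ)+1) := by exact_mod_cast hknat.symm
      rw [h2]; push_cast; field_simp; ring
    rw [hkm, hk1, grho_grid hρ m n (j+1) hm h, grho_grid hρ m n j hm hj]
    have hsplit : (((j+1:ℕ)):ℝ)/m = (j:ℝ)/m + 1/m := by push_cast; ring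
    rw [hsplit, div_eq_mul_one_div (ρ-1) (m:ℝ)]
    exact arith_same ρ _ _ _ hP.le hjm0 hd0.le

lemma upper_bound (B e gu gv gx fx fv : ℝ) (hgu : 0 < gu) (hgx : 0 < gx)
    (hgux : gu ≤ gx) (hgxv : gx ≤ gv) (hratio : gv ≤ (1+e)*gu) (he0 : 0 ≤ e)
    (hfv : fx ≤ fv) (hfvB : fv = B * gv) : fx / gx ≤ B + |B| * e := by
  rw [div_le_iff₀ hgx]
  rcases abs_cases B with ⟨hB1, hB2⟩ | ⟨hB1, hB2⟩
  · rw [hB1]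
    have t1 : B * gv ≤ B * ((1+e) * gu) := mul_le_mul_of_nonneg_left hratio hB2
    have t2 : (B * (1+e)) * gu ≤ (B * (1+e)) * gx :=
      mul_le_mul_of_nonneg_left hgux (mul_nonneg hB2 (by linarith))
    nlinarith
  · rw [hB1]
    have t1 : B * gv ≤ B * gx := mul_le_mul_of_nonpos_left hgxv (by linarith)
    nlinarith [mul_nonneg (mul_nonneg (by linarith : (0:ℝ) ≤ -B) he0) hgx.le]

lemma lower_bound (A e gu gv gx fx fu : ℝ) (hgu : 0 < gu) (hgx : 0 < gx)
    (hgux : gu ≤ gx) (hgxv : gx ≤ gv) (hratio : gv ≤ (1+e)*gu) (he0 : 0 ≤ e)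
    (hfu : fu ≤ fx) (hfuA : fu = A * gu) : A - |A| * e ≤ fx / gx := by
  rw [le_div_iff₀ hgx]
  rcases abs_cases A with ⟨hA1, hA2⟩ | ⟨hA1, hA2⟩
  · rw [hA1]
    have t1 : gx ≤ (1+e) * gu := le_trans hgxv hratio
    have t2 : A * gx ≤ A * ((1+e) * gu) := mul_le_mul_of_nonneg_left t1 hA2
    have t3 : (A * e) * gu ≤ (A * e) * gx :=
      mul_le_mul_of_nonneg_left hgux (mul_nonneg hA2 he0)
    nlinarith
  · rw [hA1]
    have t1 : gu ≤ (1+e) * gx := by nlinarith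
    have t2 : A * ((1+e) * gx) ≤ A * gu := mul_le_mul_of_nonpos_left t1 (by linarith)
    nlinarith

theorem stmt18 (ρ c : ℝ) (hρ : 1 < ρ) (φ : ℝ → ℝ)
    (hmono : MonotoneOn φ (Set.Ici 0))
    (hconv : ∀ x : ℝ, 0 ≤ x →
      Tendsto (fun n : ℕ => φ (x + n) / (ρ ^ (x + (n : ℝ)) * lrho ρ x)) atTop
        (nhds c)) :
    Tendsto (fun x : ℝ => φ x / (ρ ^ x * lrho ρ x)) atTop (nhds c) := by
  have h0 : (0:ℝ) < ρ := by linarith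
  have hconv' : ∀ x : ℝ, 0 ≤ x →
      Tendsto (fun n : ℕ => φ (x + n) / grho ρ (x + n)) atTop (nhds c) := by
    intro x hx
    refine (hconv x hx).congr fun n => ?_
    congr 1
    unfold grho lrho
    rw [Int.fract_add_natCast]
  rw [Metric.tendsto_atTop]
  intro ε hε
  obtain ⟨m, hm⟩ := exists_nat_gt (2*(ρ-1)*(|c|+1)/ε)
  have hm0 : 0 < m := by
    have hρ1 : (0:ℝ) < ρ - 1 := by linarith
    have hpos : (0:ℝ) < 2*(ρ-1)*(|c|+1)/ε := by positivity
    exact_mod_cast Nat.cast_pos.1 (lt_trans hpos hm)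
  have hmR : (0:ℝ) < m := Nat.cast_pos.2 hm0
  have heps : (ρ-1)/m * (|c|+1) < ε/2 := by
    rw [div_mul_eq_mul_div, div_lt_iff₀ hmR]
    have h2 := (div_lt_iff₀ hε).1 hm
    linarith
  set ε' := min (ε/2) 1 with hε'def
  have hε'pos : 0 < ε' := lt_min (by linarith) one_pos
  have hε'half : ε' ≤ ε/2 := min_le_left _ _
  have hε'one : ε' ≤ 1 := min_le_right _ _
  have key : ∀ j : ℕ, ∃ N : ℕ, ∀ n ≥ N,
      |φ ((j:ℝ)/m + n) / grho ρ ((j:ℝ)/m + n) - c| < ε' := by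
    intro j
    obtain ⟨N, hN⟩ := (Metric.tendsto_atTop.1 (hconv' ((j:ℝ)/m) (by positivity))) ε' hε'pos
    exact ⟨N, fun n hn => by simpa [Real.dist_eq] using hN n hn⟩
  choose Nf hNf using key
  set N : ℕ := (Finset.range m).sup Nf with hNdef
  have hNle : ∀ j < m, Nf j ≤ N := fun j hj => Finset.le_sup (Finset.mem_range.2 hj)
  refine ⟨(N:ℝ)+1, fun x hx => ?_⟩
  have hNn : (0:ℝ) ≤ (N:ℝ) := Nat.cast_nonneg N
  have hx0 : 0 ≤ x := by linarith
  set K : ℤ := ⌊x * m⌋ with hKdef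
  have hK0 : 0 ≤ K := Int.floor_nonneg.2 (mul_nonneg hx0 hmR.le)
  set k : ℕ := K.toNat with hkdef
  have hkK : (k:ℝ) = (K:ℝ) := by exact_mod_cast Int.toNat_of_nonneg hK0
  have hk1 : (k:ℝ) ≤ x * m := by rw [hkK]; exact Int.floor_le _
  have hk2 : x * m < (k:ℝ) + 1 := by rw [hkK]; exact Int.lt_floor_add_one _
  have hux : (k:ℝ)/m ≤ x := (div_le_iff₀ hmR).2 hk1
  have hxv : x ≤ ((k:ℝ)+1)/m := (le_div_iff₀ hmR).2 hk2.le
  have hm1 : (1:ℝ) ≤ m := by exact_mod_cast hm0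
  have hkN : N * m ≤ k := by
    have hNk : ((N:ℝ)) * m < k := by
      have := mul_le_mul_of_nonneg_right hx hmR.le
      linarith
    exact_mod_cast hNk.le
  set n : ℕ := k / m with hndef
  set j : ℕ := k % m with hjdef
  have hj : j < m := Nat.mod_lt _ hm0
  have hn : N ≤ n := (Nat.le_div_iff_mul_le hm0).2 hkN
  set n' : ℕ := (k+1) / m with hn'def
  set j' : ℕ := (k+1) % m with hj'def
  have hj' : j' < m := Nat.mod_lt _ hm0
  have hn' : N ≤ n' := le_trans hn (Nat.div_le_div_right (Nat.le_succ k))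
  set u : ℝ := (j:ℝ)/m + (n:ℕ) with hudef
  set v : ℝ := (j':ℝ)/m + (n':ℕ) with hvdef
  have hu : u = (k:ℝ)/m := by
    have hk' : (k:ℝ) = (m:ℝ)*n + j := by exact_mod_cast (Nat.div_add_mod k m).symm
    rw [hudef, hk']; field_simp; ring
  have hv : v = ((k:ℝ)+1)/m := by
    have hk' : ((k:ℝ)+1) = (m:ℝ)*n' + j' := by exact_mod_cast (Nat.div_add_mod (k+1) m).symm
    rw [hvdef, hk']; field_simp; ring
  set A : ℝ := φ u / grho ρ u with hAdef
  set B : ℝ := φ v / grho ρ v with hBdef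
  have hAc : |A - c| < ε' := hNf j n (le_trans (hNle j hj) hn)
  have hBc : |B - c| < ε' := hNf j' n' (le_trans (hNle j' hj') hn')
  -- positivity / monotonicity facts
  have hgu : 0 < grho ρ u := grho_pos hρ u
  have hgv : 0 < grho ρ v := grho_pos hρ v
  have hgx : 0 < grho ρ x := grho_pos hρ x
  have hu0 : 0 ≤ u := by rw [hudef]; positivity
  have hv0 : 0 ≤ v := by rw [hvdef]; positivity
  have huxx : u ≤ x := hu ▸ hux
  have hxvv : x ≤ v := hv ▸ hxv
  have hφu : φ u ≤ φ x := hmono hu0 hx0 huxx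
  have hφv : φ x ≤ φ v := hmono hx0 hv0 hxvv
  have hgux : grho ρ u ≤ grho ρ x := grho_mono hρ huxx
  have hgxv : grho ρ x ≤ grho ρ v := grho_mono hρ hxvv
  set e : ℝ := (ρ-1)/m with hedef
  have he0 : 0 ≤ e := by
    rw [hedef]
    have hρ1 : (0:ℝ) < ρ - 1 := by linarith
    positivity
  have hratio : grho ρ v ≤ (1+e) * grho ρ u := by
    rw [hu, hv]; exact grho_ratio hρ m k hm0
  have hφuA : φ u = A * grho ρ u := by rw [hAdef]; field_simp
  have hφvB : φ v = B * grho ρ v := by rw [hBdef]; field_simp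
  -- sandwich
  have hupper : φ x / grho ρ x ≤ B + |B| * e :=
    upper_bound B e (grho ρ u) (grho ρ v) (grho ρ x) (φ x) (φ v)
      hgu hgx hgux hgxv hratio he0 hφv hφvB
  have hlower : A - |A| * e ≤ φ x / grho ρ x :=
    lower_bound A e (grho ρ u) (grho ρ v) (grho ρ x) (φ x) (φ u)
      hgu hgx hgux hgxv hratio he0 hφu hφuA
  -- conclude
  have hgoal : |φ x / grho ρ x - c| < ε := by
    have hBabs : |B| ≤ |c| + 1 := by
      have := abs_sub_abs_le_abs_sub B c
      linarith
    have hAabs : |A| ≤ |c| + 1 := by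
      have := abs_sub_abs_le_abs_sub A c
      linarith
    have hBe : |B| * e ≤ (|c|+1) * e := mul_le_mul_of_nonneg_right hBabs he0
    have hAe : |A| * e ≤ (|c|+1) * e := mul_le_mul_of_nonneg_right hAabs he0
    have habsA : A - c < ε' ∧ -(ε') < A - c := abs_lt.1 hAc |>.symm
    have habsB : B - c < ε' ∧ -(ε') < B - c := abs_lt.1 hBc |>.symm
    rw [abs_sub_lt_iff]
    constructor
    · have : (|c|+1) * e < ε/2 := by rw [hedef]; linarith
      linarith [habsB.1]
    · have : (|c|+1) * e < ε/2 := by rw [hedef]; linarith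
      linarith [habsA.2]
  show dist (φ x / (ρ ^ x * lrho ρ x)) c < ε
  rw [Real.dist_eq]
  exact hgoal
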